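/- Let p ∈ (1,∞) and 1 ≤ q ≤ r ≤ ∞. Then for any measure space (X,μ), L^{p,q}(X) ⊂ L^{p,r}(X), and there exists a constant C(p,q,r), independent of (X,μ), such that ‖f‖_{p,r} ≤ C(p,q,r)‖f‖_{p,q} for all f ∈ L^{p,q}(X). -/

import Mathlib

open MeasureTheory ENNReal NNReal Set Filter

/-- The distribution function `d_f(t) = μ {x : t ≤ |f x|}`. -/
noncomputable def distFun {X : Type*} [MeasurableSpace X] (μ : Measure X) (f : X → ℝ) (t : ℝ) :
    ℝ≥0∞ :=
  μ {x | t ≤ |f x|}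

/-- The Lorentz quasi-norm `‖f‖_{p,q}` (with `q = ⊤` giving the weak-type norm). -/
noncomputable def lorentzNorm {X : Type*} [MeasurableSpace X] (μ : Measure X) (p : ℝ)
    (q : ℝ≥0∞) (f : X → ℝ) : ℝ≥0∞ :=
  if q = ⊤ then ⨆ t ∈ Ioi (0 : ℝ), ENNReal.ofReal t * distFun μ f t ^ (1 / p)
  else ENNReal.ofReal p ^ (1 / q.toReal) *
    (∫⁻ t in Ioi (0 : ℝ),
      (ENNReal.ofReal t * distFun μ f t ^ (1 / p)) ^ q.toReal / ENNReal.ofReal t) ^ (1 / q.toReal)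

lemma distFun_anti {X : Type*} [MeasurableSpace X] (μ : Measure X) (f : X → ℝ) {s t : ℝ}
    (h : s ≤ t) : distFun μ f t ≤ distFun μ f s :=
  measure_mono fun x hx => le_trans h hx

/-- Weak-type bound: `t d_f(t)^{1/p} ≤ 4 (∫ ...)^{1/q'}`. -/
lemma weak_bound {X : Type*} [MeasurableSpace X] (μ : Measure X) (p : ℝ) (hp : 0 < p)
    (f : X → ℝ) (q' : ℝ) (hq' : 1 ≤ q') {t : ℝ} (ht : 0 < t) :
    ENNReal.ofReal t * distFun μ f t ^ (1 / p) ≤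
      4 * (∫⁻ s in Ioi (0 : ℝ),
        (ENNReal.ofReal s * distFun μ f s ^ (1 / p)) ^ q' / ENNReal.ofReal s) ^ (1 / q') := by
  set I := ∫⁻ s in Ioi (0 : ℝ),
    (ENNReal.ofReal s * distFun μ f s ^ (1 / p)) ^ q' / ENNReal.ofReal s with hI
  have ht2 : 0 < t / 2 := by linarith
  have hq0 : q' ≠ 0 := ne_of_gt (by linarith)
  have hq'nn : (0 : ℝ) ≤ q' := by linarith
  have hinvq : (0 : ℝ) ≤ 1 / q' := one_div_nonneg.2 hq'nn
  set u := ENNReal.ofReal (t / 2) with hu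
  set D := distFun μ f t ^ (1 / p) with hD
  have hu0 : u ≠ 0 := by simpa [hu, ENNReal.ofReal_eq_zero, not_le] using ht2
  have huT : u ≠ ⊤ := ENNReal.ofReal_ne_top
  set K := (u * D) ^ q' / ENNReal.ofReal t with hK
  -- step 1 : K * u ≤ I
  have h1 : K * u ≤ I := by
    have hsub : Ioc (t / 2) t ⊆ Ioi (0 : ℝ) := fun s hs => lt_trans ht2 hs.1
    calc K * u = ∫⁻ _ in Ioc (t / 2) t, K ∂volume := by
          rw [setLIntegral_const, Real.volume_Ioc, show t - t / 2 = t / 2 by ring]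
      _ ≤ ∫⁻ s in Ioc (t / 2) t,
            (ENNReal.ofReal s * distFun μ f s ^ (1 / p)) ^ q' / ENNReal.ofReal s ∂volume := by
          apply lintegral_mono_ae
          filter_upwards [ae_restrict_mem measurableSet_Ioc] with s hs
          rw [hK, hu, hD]
          gcongr
          · exact hs.1.le
          · exact distFun_anti μ f hs.2
          · exact hs.2
      _ ≤ I := lintegral_mono_set hsub
  -- step 2 : (ofReal t * D) ^ q' ≤ 4 ^ q' * (K * u)
  have hot : ENNReal.ofReal t = 2 * u := by
    rw [hu, show t = 2 * (t / 2) by ring, ENNReal.ofReal_mul (by norm_num)]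
    norm_num
  have hKu : K * u = (u * D) ^ q' / 2 := by
    rw [hK, hot, div_eq_mul_inv, mul_right_comm, ← div_eq_mul_inv,
      ENNReal.mul_div_mul_right _ _ hu0 huT]
  have h2le : (2 : ℝ≥0∞) ≤ 2 ^ q' := by
    calc (2 : ℝ≥0∞) = 2 ^ (1 : ℝ) := (ENNReal.rpow_one 2).symm
      _ ≤ 2 ^ q' := ENNReal.rpow_le_rpow_of_exponent_le (by norm_num) hq'
  have h2 : (ENNReal.ofReal t * D) ^ q' ≤ 4 ^ q' * (K * u) := by
    have inner : (u * D) ^ q' ≤ 2 ^ q' * ((u * D) ^ q' / 2) :=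
      calc (u * D) ^ q' = 2 * ((u * D) ^ q' / 2) :=
            (ENNReal.mul_div_cancel' (by norm_num) (by norm_num)).symm
        _ ≤ 2 ^ q' * ((u * D) ^ q' / 2) := mul_le_mul_left h2le _
    calc (ENNReal.ofReal t * D) ^ q' = (2 * (u * D)) ^ q' := by rw [hot, mul_assoc]
      _ = 2 ^ q' * (u * D) ^ q' := ENNReal.mul_rpow_of_nonneg _ _ hq'nn
      _ ≤ 2 ^ q' * (2 ^ q' * ((u * D) ^ q' / 2)) := mul_le_mul_right inner _
      _ = (2 * 2 : ℝ≥0∞) ^ q' * ((u * D) ^ q' / 2) := by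
          rw [show ((2 * 2 : ℝ≥0∞)) ^ q' = 2 ^ q' * 2 ^ q' from
            ENNReal.mul_rpow_of_nonneg 2 2 hq'nn, mul_assoc]
      _ = 4 ^ q' * (K * u) := by rw [hKu]; norm_num
  have h3 : (ENNReal.ofReal t * D) ^ q' ≤ 4 ^ q' * I :=
    h2.trans (mul_le_mul_right h1 _)
  -- conclude by taking rpow (1/q')
  calc ENNReal.ofReal t * D
      = ((ENNReal.ofReal t * D) ^ q') ^ (1 / q') := by
        rw [one_div, ENNReal.rpow_rpow_inv hq0]
    _ ≤ (4 ^ q' * I) ^ (1 / q') := ENNReal.rpow_le_rpow h3 hinvq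
    _ = 4 * I ^ (1 / q') := by
        rw [ENNReal.mul_rpow_of_nonneg _ _ hinvq, one_div, ENNReal.rpow_rpow_inv hq0]

/-- Nestedness of Lorentz spaces: for `1 < p < ∞` and `1 ≤ q ≤ r ≤ ⊤` there is a constant
`C(p,q,r)`, independent of the measure space, with `‖f‖_{p,r} ≤ C ‖f‖_{p,q}`. -/
theorem lorentz_embedding (p : ℝ) (hp : 1 < p) (q r : ℝ≥0∞) (hq : 1 ≤ q) (hqr : q ≤ r) :
    ∃ C : ℝ≥0, 0 < C ∧ ∀ (X : Type) (_ : MeasurableSpace X) (μ : Measure X)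
      (f : X → ℝ), Measurable f →
      lorentzNorm μ p r f ≤ C * lorentzNorm μ p q f := by
  have hp0 : 0 < p := by linarith
  have hpN : 0 < p.toNNReal := Real.toNNReal_pos.2 hp0
  have hCpos : (0 : ℝ≥0) < 4 * p.toNNReal := by positivity
  have hcoe : ((4 * p.toNNReal : ℝ≥0) : ℝ≥0∞) = 4 * ENNReal.ofReal p := by
    push_cast
    rfl
  have h1p : (1 : ℝ≥0∞) ≤ ENNReal.ofReal p := ENNReal.one_le_ofReal.2 hp.le
  refine ⟨4 * p.toNNReal, hCpos, ?_⟩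
  intro X mX μ f hf
  rw [hcoe]
  rcases eq_or_ne r ⊤ with hr | hr
  · subst hr
    rcases eq_or_ne q ⊤ with hq' | hq'
    · subst hq'
      refine le_mul_of_one_le_left zero_le ?_
      calc (1 : ℝ≥0∞) ≤ ENNReal.ofReal p := h1p
        _ ≤ 4 * ENNReal.ofReal p := le_mul_of_one_le_left zero_le (by norm_num)
    · have hq'1 : 1 ≤ q.toReal := by
        have := ENNReal.toReal_mono hq' hq
        simpa using this
      unfold lorentzNorm
      rw [if_pos rfl, if_neg hq']
      apply iSup₂_le
      intro t ht
      set I := ∫⁻ s in Ioi (0 : ℝ),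
        (ENNReal.ofReal s * distFun μ f s ^ (1 / p)) ^ q.toReal / ENNReal.ofReal s with hIdef
      have hone : (1 : ℝ≥0∞) ≤ ENNReal.ofReal p ^ (1 / q.toReal) := by
        calc (1 : ℝ≥0∞) = 1 ^ (1 / q.toReal) := (ENNReal.one_rpow _).symm
          _ ≤ ENNReal.ofReal p ^ (1 / q.toReal) :=
            ENNReal.rpow_le_rpow h1p (one_div_nonneg.2 (by linarith))
      refine le_trans (weak_bound μ p hp0 f q.toReal hq'1 (mem_Ioi.1 ht)) ?_
      calc 4 * I ^ (1 / q.toReal)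
          ≤ 4 * (ENNReal.ofReal p ^ (1 / q.toReal) * I ^ (1 / q.toReal)) :=
            mul_le_mul_right (le_mul_of_one_le_left zero_le hone) 4
        _ ≤ 4 * ENNReal.ofReal p * (ENNReal.ofReal p ^ (1 / q.toReal) * I ^ (1 / q.toReal)) :=
            mul_le_mul_left (le_mul_of_one_le_right zero_le h1p) _
  · -- r finite
    have hqT : q ≠ ⊤ := ne_top_of_le_ne_top hr hqr
    have hq'1 : 1 ≤ q.toReal := by
      have := ENNReal.toReal_mono hqT hq
      simpa using this
    have hqr' : q.toReal ≤ r.toReal := ENNReal.toReal_mono hr hqr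
    have hr'1 : 1 ≤ r.toReal := hq'1.trans hqr'
    unfold lorentzNorm
    rw [if_neg hr, if_neg hqT]
    set q' := q.toReal with hq'def
    set r' := r.toReal with hr'def
    have hq'0 : q' ≠ 0 := ne_of_gt (by linarith)
    have hr'0 : r' ≠ 0 := ne_of_gt (by linarith)
    set Iq := ∫⁻ s in Ioi (0 : ℝ),
      (ENNReal.ofReal s * distFun μ f s ^ (1 / p)) ^ q' / ENNReal.ofReal s with hIq
    set Ir := ∫⁻ s in Ioi (0 : ℝ),
      (ENNReal.ofReal s * distFun μ f s ^ (1 / p)) ^ r' / ENNReal.ofReal s with hIr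
    set N := ENNReal.ofReal p ^ (1 / q') * Iq ^ (1 / q') with hN
    rcases eq_or_ne N ⊤ with hNT | hNT
    · rw [hNT, ENNReal.mul_top]
      · exact le_top
      · intro h
        rw [mul_eq_zero] at h
        rcases h with h | h
        · norm_num at h
        · rw [ENNReal.ofReal_eq_zero] at h; linarith
    · have hIqN : Iq ^ (1 / q') ≤ N := by
        refine le_mul_of_one_le_left zero_le ?_
        calc (1 : ℝ≥0∞) = 1 ^ (1 / q') := (ENNReal.one_rpow _).symm
          _ ≤ ENNReal.ofReal p ^ (1 / q') :=
            ENNReal.rpow_le_rpow h1p (one_div_nonneg.2 (by linarith))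
      have hglob : ∀ s : ℝ, 0 < s →
          ENNReal.ofReal s * distFun μ f s ^ (1 / p) ≤ 4 * N := fun s hs =>
        (weak_bound μ p hp0 f q' hq'1 hs).trans (mul_le_mul_right hIqN 4)
      have h4NT : (4 : ℝ≥0∞) * N ≠ ⊤ := by
        simp [ENNReal.mul_eq_top, hNT]
      have hIrIq : Ir ≤ (4 * N) ^ (r' - q') * Iq := by
        rw [hIr, hIq, ← lintegral_const_mul' _ _
          (ENNReal.rpow_ne_top_of_nonneg (by linarith) h4NT)]
        apply lintegral_mono_ae
        filter_upwards [ae_restrict_mem measurableSet_Ioi] with s hs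
        have hsplit : (ENNReal.ofReal s * distFun μ f s ^ (1 / p)) ^ r' =
            (ENNReal.ofReal s * distFun μ f s ^ (1 / p)) ^ (r' - q') *
              (ENNReal.ofReal s * distFun μ f s ^ (1 / p)) ^ q' := by
          rw [← ENNReal.rpow_add_of_nonneg _ _ (by linarith) (by linarith), sub_add_cancel]
        rw [hsplit, mul_div_assoc]
        exact mul_le_mul_left (ENNReal.rpow_le_rpow (hglob s hs) (by linarith)) _
      have he1 : (0 : ℝ) ≤ (r' - q') * (1 / r') :=
        mul_nonneg (by linarith) (one_div_nonneg.2 (by linarith))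
      have he2 : (0 : ℝ) ≤ q' * (1 / r') :=
        mul_nonneg (by linarith) (one_div_nonneg.2 (by linarith))
      calc ENNReal.ofReal p ^ (1 / r') * Ir ^ (1 / r')
          ≤ ENNReal.ofReal p ^ (1 / r') * ((4 * N) ^ (r' - q') * Iq) ^ (1 / r') :=
            mul_le_mul_right (ENNReal.rpow_le_rpow hIrIq (one_div_nonneg.2 (by linarith))) _
        _ = ENNReal.ofReal p ^ (1 / r') *
              ((4 * N) ^ ((r' - q') * (1 / r')) * Iq ^ (1 / r')) := by
            rw [ENNReal.mul_rpow_of_nonneg _ _ (one_div_nonneg.2 (by linarith)),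
              ← ENNReal.rpow_mul]
        _ ≤ ENNReal.ofReal p ^ (1 / r') *
              ((4 * N) ^ ((r' - q') * (1 / r')) * N ^ (q' * (1 / r'))) := by
            gcongr
            calc Iq ^ (1 / r') = (Iq ^ (1 / q')) ^ (q' * (1 / r')) := by
                  rw [← ENNReal.rpow_mul]
                  congr 1
                  field_simp
              _ ≤ N ^ (q' * (1 / r')) := ENNReal.rpow_le_rpow hIqN he2
        _ = ENNReal.ofReal p ^ (1 / r') *
              (4 ^ ((r' - q') * (1 / r')) *
                (N ^ ((r' - q') * (1 / r')) * N ^ (q' * (1 / r')))) := by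
            rw [ENNReal.mul_rpow_of_nonneg _ _ he1, mul_assoc]
        _ = ENNReal.ofReal p ^ (1 / r') * (4 ^ ((r' - q') * (1 / r')) * N) := by
            rw [← ENNReal.rpow_add_of_nonneg _ _ he1 he2,
              show (r' - q') * (1 / r') + q' * (1 / r') = 1 by field_simp; ring,
              ENNReal.rpow_one]
        _ ≤ ENNReal.ofReal p * (4 * N) := by
            gcongr ?_ * (?_ * _)
            · calc ENNReal.ofReal p ^ (1 / r') ≤ ENNReal.ofReal p ^ (1 : ℝ) :=
                  ENNReal.rpow_le_rpow_of_exponent_le h1p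
                    (by rw [div_le_one (by linarith)]; linarith)
                _ = ENNReal.ofReal p := ENNReal.rpow_one _
            · calc (4 : ℝ≥0∞) ^ ((r' - q') * (1 / r')) ≤ 4 ^ (1 : ℝ) :=
                  ENNReal.rpow_le_rpow_of_exponent_le (by norm_num)
                    (by rw [mul_one_div, div_le_one (by linarith)]; linarith)
                _ = 4 := ENNReal.rpow_one _
        _ = 4 * ENNReal.ofReal p * N := by ring
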